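/- Let p be a prime, D cyclic of order p^n (n ≥ 1), E ≤ Aut(D) a p'-subgroup, and G = D ⋊ E. Let 1 ≤ i ≤ n, α ∈ Aut(D_i), and let Δ(D_i, α, D_i) = {(α(x), x) : x ∈ D_i} ≤ G×G. Then N_{G×G}(Δ(D_i,α,D_i)) = (D×D)·Δ(E), where Δ(E) = {(ρ,ρ) : ρ ∈ E}. -/

import Mathlib

open SemidirectProduct

private lemma aux_step (p : ℕ) {a d : ℤ} (hd : d ∣ a - 1) (hpd : (p:ℤ) ∣ a - 1) :
    d * p ∣ a ^ p - 1 := by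
  have hps : (p:ℤ) ∣ ∑ k ∈ Finset.range p, a ^ k := by
    have h1 : (p:ℤ) ∣ (∑ k ∈ Finset.range p, a ^ k) - p := by
      have h2 : (∑ k ∈ Finset.range p, a ^ k) - p = ∑ k ∈ Finset.range p, (a ^ k - 1) := by
        rw [Finset.sum_sub_distrib]
        simp
      rw [h2]
      exact Finset.dvd_sum fun k _ => hpd.trans (by simpa using sub_dvd_pow_sub_pow a 1 k)
    simpa using dvd_add h1 (dvd_refl (p:ℤ))
  calc d * p ∣ (a - 1) * ∑ k ∈ Finset.range p, a ^ k := mul_dvd_mul hd hps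
    _ = a ^ p - 1 := by rw [mul_comm]; exact geom_sum_mul a p

private lemma aux_pow (p : ℕ) {a : ℤ} (h : (p:ℤ) ∣ a - 1) :
    ∀ m : ℕ, (p:ℤ) ^ (m + 1) ∣ a ^ (p ^ m) - 1
  | 0 => by simpa using h
  | (m+1) => by
    have ih := aux_pow p h m
    have hstep := aux_step p ih ((dvd_pow_self (p:ℤ) (Nat.succ_ne_zero m)).trans ih)
    rw [← pow_mul, ← pow_succ, ← pow_succ] at hstep
    exact hstep

/-- Let `p` be a prime, `D` cyclic of order `p^n`, `E ≤ Aut(D)` a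
`p'`-subgroup and `G = D ⋊ E`.  For `1 ≤ i ≤ n`, `D_i ≤ D` the subgroup of order `p^i`
and `α ∈ Aut(D_i)`, the normalizer of `Δ(D_i,α,D_i) = {(α x, x) : x ∈ D_i}` in `G × G`
is `(D × D)·Δ(E)`. -/
theorem stmt12 (p n : ℕ) (hp : p.Prime) (hn : 1 ≤ n)
    (D : Type*) [Group D] [IsCyclic D] [Fintype D] (hD : Fintype.card D = p ^ n)
    (E : Subgroup (MulAut D)) (hE : Nat.Coprime (Nat.card E) p)
    (i : ℕ) (hi1 : 1 ≤ i) (hin : i ≤ n)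
    (Di : Subgroup D) (hDi : Nat.card Di = p ^ i) (α : Di ≃* Di)
    (S : Subgroup ((D ⋊[E.subtype] E) × (D ⋊[E.subtype] E)))
    (hS : (S : Set ((D ⋊[E.subtype] E) × (D ⋊[E.subtype] E))) =
      {z | ∃ x : Di, z = (SemidirectProduct.inl ((α x : Di) : D),
                          SemidirectProduct.inl ((x : Di) : D))}) :
    (Subgroup.normalizer (S : Set ((D ⋊[E.subtype] E) × (D ⋊[E.subtype] E))) : Set ((D ⋊[E.subtype] E) × (D ⋊[E.subtype] E))) =
      {z | ∃ (x y : D) (ρ : E),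
        z = (SemidirectProduct.inl x * SemidirectProduct.inr ρ,
             SemidirectProduct.inl y * SemidirectProduct.inr ρ)} := by
  classical
  haveI : Fact p.Prime := ⟨hp⟩
  -- commutativity of D
  have comm : ∀ a b : D, a * b = b * a := fun a b =>
    (IsCyclic.commGroup (α := D)).mul_comm a b
  -- the conjugation formula in the semidirect product
  have hconj : ∀ (a : D) (ρ : E) (u : D),
      (inl a * inr ρ : D ⋊[E.subtype] E) * inl u * (inl a * inr ρ)⁻¹
        = inl ((ρ : MulAut D) u) := by
    intro a ρ u
    have hinv : (inl a * inr ρ : D ⋊[E.subtype] E)⁻¹ = inr ρ⁻¹ * inl a⁻¹ := by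
      rw [mul_inv_rev, ← MonoidHom.map_inv, ← MonoidHom.map_inv]
    have h2 : (inr ρ : D ⋊[E.subtype] E) * inl u * inr ρ⁻¹ = inl ((ρ : MulAut D) u) :=
      (inl_aut (φ := E.subtype) ρ u).symm
    calc (inl a * inr ρ : D ⋊[E.subtype] E) * inl u * (inl a * inr ρ)⁻¹
        = inl a * ((inr ρ : D ⋊[E.subtype] E) * inl u * inr ρ⁻¹) * inl a⁻¹ := by
          rw [hinv]; group
      _ = inl a * inl ((ρ : MulAut D) u) * inl a⁻¹ := by rw [h2]
      _ = inl (a * (ρ : MulAut D) u * a⁻¹) := by rw [← map_mul, ← map_mul]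
      _ = inl ((ρ : MulAut D) u) := by rw [comm a, mul_inv_cancel_right]
  -- membership in S
  have memS : ∀ z : (D ⋊[E.subtype] E) × (D ⋊[E.subtype] E),
      z ∈ S ↔ ∃ u : Di, z = (inl ((α u : Di) : D), inl ((u : Di) : D)) := by
    intro z
    rw [← SetLike.mem_coe, hS]
    exact Iff.rfl
  -- α is a power map
  obtain ⟨mα, hmα⟩ := MonoidHom.map_cyclic (α.toMonoidHom)
  have hmα : ∀ u : Di, α u = u ^ mα := hmα
  -- automorphisms of D commute with α on Di
  have key : ∀ (ρ : MulAut D) (u : Di), ∃ u' : Di,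
      ρ ((α u : Di) : D) = ((α u' : Di) : D) ∧ ρ ((u : Di) : D) = ((u' : Di) : D) := by
    intro ρ u
    obtain ⟨k, hk⟩ := MonoidHom.map_cyclic (ρ : D →* D)
    have hk : ∀ g : D, ρ g = g ^ k := hk
    have hmem : ρ ((u : Di) : D) ∈ Di := by
      rw [hk]; exact Di.zpow_mem u.2 k
    refine ⟨⟨ρ ((u : Di) : D), hmem⟩, ?_, rfl⟩
    rw [hmα u, hmα ⟨ρ ((u : Di) : D), hmem⟩]
    push_cast
    rw [map_zpow]
  -- conjugation by diagonal-type elements preserves S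
  have conj_mem : ∀ (x y : D) (ρ : E) (h : (D ⋊[E.subtype] E) × (D ⋊[E.subtype] E)),
      h ∈ S → ((inl x * inr ρ, inl y * inr ρ) :
        (D ⋊[E.subtype] E) × (D ⋊[E.subtype] E)) * h * (inl x * inr ρ, inl y * inr ρ)⁻¹ ∈ S := by
    intro x y ρ h hh
    rw [memS] at hh ⊢
    obtain ⟨u, rfl⟩ := hh
    obtain ⟨u', h1, h2⟩ := key (ρ : MulAut D) u
    refine ⟨u', ?_⟩
    have e1 : ((inl x * inr ρ, inl y * inr ρ) :
        (D ⋊[E.subtype] E) × (D ⋊[E.subtype] E)) * (inl ((α u : Di) : D), inl ((u : Di) : D))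
          * (inl x * inr ρ, inl y * inr ρ)⁻¹
        = ((inl x * inr ρ) * inl ((α u : Di) : D) * (inl x * inr ρ)⁻¹,
           (inl y * inr ρ) * inl ((u : Di) : D) * (inl y * inr ρ)⁻¹) := rfl
    rw [e1, hconj, hconj, h1, h2]
  ext z
  simp only [SetLike.mem_coe, Set.mem_setOf_eq]
  constructor
  · intro hz
    rw [Subgroup.mem_normalizer_iff] at hz
    -- agreement of the two right components on Di
    have hagree : ∀ v : Di, ((z.1.right : MulAut D)) ((v : Di) : D)
        = ((z.2.right : MulAut D)) ((v : Di) : D) := by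
      intro v
      set u := α.symm v with hu
      have hs : ((inl ((α u : Di) : D), inl ((u : Di) : D)) :
          (D ⋊[E.subtype] E) × (D ⋊[E.subtype] E)) ∈ S := (memS _).mpr ⟨u, rfl⟩
      have hc := (hz _).mp hs
      rw [memS] at hc
      obtain ⟨u', hcc⟩ := hc
      have hz1 : z = (inl z.1.left * inr z.1.right, inl z.2.left * inr z.2.right) :=
        Prod.ext (inl_left_mul_inr_right z.1).symm (inl_left_mul_inr_right z.2).symm
      rw [hz1] at hcc
      have e1 : ((inl z.1.left * inr z.1.right, inl z.2.left * inr z.2.right) :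
          (D ⋊[E.subtype] E) × (D ⋊[E.subtype] E)) * (inl ((α u : Di) : D), inl ((u : Di) : D))
            * (inl z.1.left * inr z.1.right, inl z.2.left * inr z.2.right)⁻¹
          = ((inl z.1.left * inr z.1.right) * inl ((α u : Di) : D)
              * (inl z.1.left * inr z.1.right)⁻¹,
             (inl z.2.left * inr z.2.right) * inl ((u : Di) : D)
              * (inl z.2.left * inr z.2.right)⁻¹) := rfl
      rw [e1, hconj, hconj] at hcc
      have h1 : ((z.1.right : MulAut D)) ((α u : Di) : D) = ((α u' : Di) : D) :=
        inl_injective (congrArg Prod.fst hcc)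
      have h2 : ((z.2.right : MulAut D)) ((u : Di) : D) = ((u' : Di) : D) :=
        inl_injective (congrArg Prod.snd hcc)
      have e2 : ((α u' : Di) : D) = ((z.2.right : MulAut D)) ((α u : Di) : D) := by
        rw [hmα u', hmα u]
        push_cast
        rw [map_zpow, h2]
      rw [e2] at h1
      have : (α u : Di) = v := α.apply_symm_apply v
      rw [this] at h1
      exact h1
    -- the quotient automorphism fixing Di is trivial
    set τ : E := (z.2.right)⁻¹ * z.1.right with hτdef
    have hfix : ∀ v : Di, ((τ : MulAut D)) ((v : Di) : D) = ((v : Di) : D) := by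
      intro v
      have hcoe : ((τ : MulAut D)) = ((z.2.right : MulAut D))⁻¹ * ((z.1.right : MulAut D)) := rfl
      rw [hcoe, MulAut.mul_apply, hagree v, MulAut.inv_apply_self]
    -- an element of order p in Di
    have hpi : p ∣ Nat.card Di := by
      rw [hDi]; exact dvd_pow_self p (by omega)
    obtain ⟨w, hw⟩ := exists_prime_orderOf_dvd_card' (G := Di) p hpi
    have hword : orderOf ((w : Di) : D) = p :=
      (orderOf_injective Di.subtype Di.subtype_injective w).trans hw
    -- τ is a power map
    obtain ⟨m, hm⟩ := MonoidHom.map_cyclic ((τ : MulAut D) : D →* D)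
    have hm : ∀ g : D, ((τ : MulAut D)) g = g ^ m := hm
    have hpm : (p : ℤ) ∣ m - 1 := by
      rw [← hword, orderOf_dvd_iff_zpow_eq_one, zpow_sub, zpow_one, ← hm, hfix w,
        mul_inv_cancel]
    have hdvd : (p : ℤ) ^ n ∣ m ^ (p ^ (n - 1)) - 1 := by
      have h := aux_pow p hpm (n - 1)
      rwa [Nat.sub_add_cancel hn] at h
    have hpowfix : ∀ (k : ℕ) (g : D), (((τ : MulAut D)) ^ k) g = g ^ (m ^ k) := by
      intro k
      induction k with
      | zero => intro g; simp
      | succ k ih =>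
        intro g
        rw [pow_succ, MulAut.mul_apply, hm g, ih (g ^ m), ← zpow_mul, pow_succ,
          mul_comm (m ^ k) m]
    have hτpow : ((τ : MulAut D)) ^ (p ^ (n - 1)) = 1 := by
      ext g
      rw [hpowfix, MulAut.one_apply]
      obtain ⟨c, hc⟩ := hdvd
      have hmc : m ^ (p ^ (n - 1)) = 1 + (p : ℤ) ^ n * c := by linarith
      have hg : g ^ ((p : ℤ) ^ n) = 1 := by
        have hcast : ((p : ℤ) ^ n) = ((p ^ n : ℕ) : ℤ) := by push_cast; ring
        rw [hcast, zpow_natCast, ← hD, pow_card_eq_one]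
      rw [hmc, zpow_add, zpow_one, zpow_mul, hg, one_zpow, mul_one]
    have hord1 : orderOf τ ∣ p ^ (n - 1) :=
      (orderOf_injective E.subtype E.subtype_injective τ) ▸ orderOf_dvd_of_pow_eq_one hτpow
    have hord2 : orderOf τ ∣ Nat.card E := orderOf_dvd_natCard τ
    have hcop : Nat.Coprime (orderOf τ) p := Nat.Coprime.coprime_dvd_left hord2 hE
    have hτone : τ = 1 := orderOf_eq_one_iff.mp ((hcop.pow_right (n - 1)).eq_one_of_dvd hord1)
    have hρσ : z.2.right = z.1.right := inv_mul_eq_one.mp hτone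
    refine ⟨z.1.left, z.2.left, z.1.right, ?_⟩
    refine Prod.ext (inl_left_mul_inr_right z.1).symm ?_
    rw [← hρσ]
    exact (inl_left_mul_inr_right z.2).symm
  · rintro ⟨x, y, ρ, rfl⟩
    rw [Subgroup.mem_normalizer_iff]
    intro h
    constructor
    · exact conj_mem x y ρ h
    · intro hin
      have h2 := conj_mem (((ρ⁻¹ : E) : MulAut D) x⁻¹) (((ρ⁻¹ : E) : MulAut D) y⁻¹) ρ⁻¹
        (((inl x * inr ρ, inl y * inr ρ) :
          (D ⋊[E.subtype] E) × (D ⋊[E.subtype] E)) * h * (inl x * inr ρ, inl y * inr ρ)⁻¹) hin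
      have einv : ∀ a : D, (inl (((ρ⁻¹ : E) : MulAut D) a⁻¹) * inr ρ⁻¹ :
          D ⋊[E.subtype] E) = (inl a * inr ρ)⁻¹ := by
        intro a
        ext <;> simp
      rw [show ((inl (((ρ⁻¹ : E) : MulAut D) x⁻¹) * inr ρ⁻¹,
          inl (((ρ⁻¹ : E) : MulAut D) y⁻¹) * inr ρ⁻¹) :
          (D ⋊[E.subtype] E) × (D ⋊[E.subtype] E))
          = (inl x * inr ρ, inl y * inr ρ)⁻¹ from Prod.ext (einv x) (einv y)] at h2
      have e2 : ((inl x * inr ρ, inl y * inr ρ) :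
          (D ⋊[E.subtype] E) × (D ⋊[E.subtype] E))⁻¹
          * ((inl x * inr ρ, inl y * inr ρ) * h * (inl x * inr ρ, inl y * inr ρ)⁻¹)
          * ((inl x * inr ρ, inl y * inr ρ)⁻¹)⁻¹ = h := by group
      rwa [e2] at h2
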